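/- For all integers m ≥ 1 and x ≥ 1 and every codeword c ∈ C(m,x), the leftmost bit c_{m−1} equals 0 if and only if 2·g(c) < N(m,x); that is, the codewords starting with 0 from the left are exactly the first N(m,x)/2 codewords in lexicographic order. -/
import Mathlib


/-- `noForbidden m x c` says the binary word `c = (c_{m-1}, …, c_0)` contains no contiguous
subword of the form `0 1^y 0` or `1 0^y 1` for any `1 ≤ y ≤ x`. -/
def noForbidden (m x : ℕ) (c : Fin m → Bool) : Prop :=
  ∀ j y : ℕ, 1 ≤ y → y ≤ x → (h : j + y + 1 < m) →
    ¬ ((∀ k, 1 ≤ k → (hk : k ≤ y) → c ⟨j + k, by omega⟩ = ! c ⟨j, by omega⟩) ∧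
        c ⟨j + y + 1, h⟩ = c ⟨j, by omega⟩)

/-- `N(m, x)`: the cardinality of the LOCO code `C(m, x)`. -/
noncomputable def locoN (m x : ℕ) : ℕ := Nat.card {c : Fin m → Bool // noForbidden m x c}

/-- `N(k, x)` extended to integer `k` by the convention `N(k, x) = 2` for `k ≤ 1`. -/
noncomputable def Nex (k : ℤ) (x : ℕ) : ℤ := if k ≤ 1 then 2 else (locoN k.toNat x : ℤ)

/-- Strict lexicographic order on binary words, comparing bits from `c_{m-1}`
(most significant) down to `c_0`, with `0 < 1`. -/
def lexLt (m : ℕ) (d c : Fin m → Bool) : Prop :=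
  ∃ i : Fin m, d i = false ∧ c i = true ∧ ∀ j : Fin m, (i : ℕ) < (j : ℕ) → d j = c j

/-- The index `g(m, x, c)` of a codeword: the number of codewords of `C(m, x)` that
precede `c` in lexicographic order. -/
noncomputable def locoIdx (m x : ℕ) (c : Fin m → Bool) : ℕ :=
  Nat.card {d : Fin m → Bool // noForbidden m x d ∧ lexLt m d c}

-- auxiliary
def bneg (m : ℕ) (c : Fin m → Bool) : Fin m → Bool := fun i => ! c i

lemma bneg_noForbidden {m x : ℕ} {c : Fin m → Bool} (hc : noForbidden m x c) :
    noForbidden m x (bneg m c) := by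
  intro j y h1 h2 h H
  apply hc j y h1 h2 h
  obtain ⟨H1, H2⟩ := H
  refine ⟨fun k hk1 hk2 => ?_, ?_⟩
  · have := H1 k hk1 hk2; simpa [bneg] using this
  · have := H2; simpa [bneg] using this

lemma bneg_invol (m : ℕ) (c : Fin m → Bool) : bneg m (bneg m c) = c := by
  funext i; simp [bneg]

lemma bneg_inj (m : ℕ) : Function.Injective (bneg m) := by
  intro a b h
  have := congrArg (bneg m) h
  rwa [bneg_invol, bneg_invol] at this

lemma lexLt_irrefl (m : ℕ) (c : Fin m → Bool) : ¬ lexLt m c c := by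
  rintro ⟨i, h1, h2, _⟩; rw [h1] at h2; exact Bool.false_ne_true h2

lemma lead_lexLt {m : ℕ} (hm : 1 ≤ m) {d c : Fin m → Bool}
    (hd : d ⟨m - 1, by omega⟩ = false) (hc : c ⟨m - 1, by omega⟩ = true) :
    lexLt m d c := by
  refine ⟨⟨m - 1, by omega⟩, hd, hc, fun j hj => ?_⟩
  exfalso
  have hj' : m - 1 < (j : ℕ) := hj
  have := j.isLt
  omega

lemma lexLt_lead {m : ℕ} (hm : 1 ≤ m) {d c : Fin m → Bool}
    (h : lexLt m d c) (hc : c ⟨m - 1, by omega⟩ = false) :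
    d ⟨m - 1, by omega⟩ = false := by
  obtain ⟨i, hdi, hci, hj⟩ := h
  rcases eq_or_lt_of_le (Nat.le_sub_one_of_lt i.isLt) with h | h
  · have : i = ⟨m - 1, by omega⟩ := Fin.ext h
    rw [this] at hci; rw [hci] at hc; exact absurd hc (by simp)
  · rw [hj ⟨m - 1, by omega⟩ h]; exact hc

/-- For all `m ≥ 1`, `x ≥ 1` and every codeword `c ∈ C(m, x)`, the leftmost
bit `c_{m-1}` equals `0` iff `2 g(c) < N(m, x)`; the codewords starting with `0` from the left
are exactly the first `N(m, x)/2` codewords in lexicographic order. -/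
theorem loco_lmb_zero_iff_first_half (m x : ℕ) (hm : 1 ≤ m) (hx : 1 ≤ x)
    (c : Fin m → Bool) (hc : noForbidden m x c) :
    c ⟨m - 1, by omega⟩ = false ↔ 2 * locoIdx m x c < locoN m x := by
  classical
  set S : Set (Fin m → Bool) := {d | noForbidden m x d} with hS
  set A : Set (Fin m → Bool) := {d | noForbidden m x d ∧ d ⟨m - 1, by omega⟩ = false} with hA
  set B : Set (Fin m → Bool) := {d | noForbidden m x d ∧ d ⟨m - 1, by omega⟩ = true} with hB
  set P : Set (Fin m → Bool) := {d | noForbidden m x d ∧ lexLt m d c} with hP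
  have hNcard : locoN m x = S.ncard := rfl
  have hIdx : locoIdx m x c = P.ncard := rfl
  have hUnion : S = A ∪ B := by
    ext d
    simp only [hS, hA, hB, Set.mem_setOf_eq, Set.mem_union]
    constructor
    · intro hd
      rcases Bool.eq_false_or_eq_true (d ⟨m - 1, by omega⟩) with h | h
      · exact Or.inr ⟨hd, h⟩
      · exact Or.inl ⟨hd, h⟩
    · rintro (⟨h, _⟩ | ⟨h, _⟩) <;> exact h
  have hDisj : Disjoint A B := by
    rw [Set.disjoint_left]
    rintro d ⟨_, h1⟩ ⟨_, h2⟩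
    rw [h1] at h2; exact Bool.false_ne_true h2
  have hScard : S.ncard = A.ncard + B.ncard := by
    rw [hUnion, Set.ncard_union_eq hDisj (Set.toFinite A) (Set.toFinite B)]
  have hImage : bneg m '' A = B := by
    ext e
    simp only [Set.mem_image, hA, hB, Set.mem_setOf_eq]
    constructor
    · rintro ⟨a, ⟨ha, hlead⟩, rfl⟩
      exact ⟨bneg_noForbidden ha, by simp [bneg, hlead]⟩
    · rintro ⟨he, hlead⟩
      exact ⟨bneg m e, ⟨bneg_noForbidden he, by simp [bneg, hlead]⟩, bneg_invol m e⟩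
  have hAB : A.ncard = B.ncard := by
    rw [← hImage, Set.ncard_image_of_injective _ (bneg_inj m)]
  constructor
  · intro hlead
    -- predecessors are a proper subset of A
    have hsub : P ⊂ A := by
      constructor
      · rintro d ⟨hd, hlt⟩
        exact ⟨hd, lexLt_lead hm hlt hlead⟩
      · intro habs
        have hcA : c ∈ A := ⟨hc, hlead⟩
        have : c ∈ P := habs hcA
        exact lexLt_irrefl m c this.2
    have hlt : P.ncard < A.ncard := Set.ncard_lt_ncard hsub (Set.toFinite A)
    rw [hNcard, hIdx, hScard, ← hAB]
    omega
  · intro hhalf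
    by_contra hlead
    have hlead' : c ⟨m - 1, by omega⟩ = true := by
      cases h : c ⟨m - 1, by omega⟩
      · exact absurd h hlead
      · rfl
    have hsub : A ⊆ P := by
      rintro d ⟨hd, hdlead⟩
      exact ⟨hd, lead_lexLt hm hdlead hlead'⟩
    have hle : A.ncard ≤ P.ncard := Set.ncard_le_ncard hsub (Set.toFinite P)
    rw [hNcard, hIdx, hScard, ← hAB] at hhalf
    omega
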